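/- Let s ≥ 1, m ≥ 2, and let W(x₁, ..., xₛ) be a nontrivial positive word in the free group on x₁, ..., xₛ (a nonempty product of the generators with only positive exponents). In the free group on two letters t, x, set zᵢ = tⁱ x t⁻ⁱ for 0 ≤ i ≤ s+1. Then the one-relator group Γ_W = ⟨t, x | z_s (W(z₀, ..., z_{s−1}) z_{s+1}) z_s⁻¹ = (W(z₀, ..., z_{s−1}) z_{s+1})ᵐ⟩ is not bi-orderable. -/

import Mathlib

/-- A group is bi-orderable if there is a linear (strict total) order on it which is
invariant under both left and right multiplication. -/
def IsBiOrderable (G : Type*) [Group G] : Prop :=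
  ∃ lt : G → G → Prop, IsStrictTotalOrder G lt ∧
    (∀ f g h : G, lt g h → lt (f * g) (f * h)) ∧
    (∀ f g h : G, lt g h → lt (g * f) (h * f))

namespace GammaW

/-- `zgen i = tⁱ x t⁻ⁱ` in the free group on the two generators `t = of true`,
`x = of false`. -/
def zgen (i : ℕ) : FreeGroup Bool :=
  (FreeGroup.of true) ^ i * FreeGroup.of false * ((FreeGroup.of true) ^ i)⁻¹

/-- The substituted positive word `W(z₀, …, z_{s-1})`, where the positive word `W` in
`x₁, …, xₛ` is encoded by the (nonempty) list `w` of its letters (entry `j : Fin s`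
stands for the generator `x_{j+1}`, which is substituted by `z_j`). -/
def Wz {s : ℕ} (w : List (Fin s)) : FreeGroup Bool :=
  (w.map fun j => zgen (j : ℕ)).prod

/-- The relator `z_s (W(z₀,…,z_{s−1}) z_{s+1}) z_s⁻¹ (W(z₀,…,z_{s−1}) z_{s+1})^{−m}`. -/
def relatorW (s m : ℕ) (w : List (Fin s)) : FreeGroup Bool :=
  zgen s * (Wz w * zgen (s + 1)) * (zgen s)⁻¹ * ((Wz w * zgen (s + 1)) ^ m)⁻¹

/-- The one-relator group `Γ_W`. -/
abbrev ΓW (s m : ℕ) (w : List (Fin s)) : Type :=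
  PresentedGroup ({relatorW s m w} : Set (FreeGroup Bool))

end GammaW

namespace GammaWProof

open GammaW

theorem list_exists_min {α : Type*} [LinearOrder α] :
    ∀ (L : List α), L ≠ [] → ∃ a ∈ L, ∀ b ∈ L, a ≤ b
  | [], h => absurd rfl h
  | [a], _ => ⟨a, by simp⟩
  | a :: b :: L, _ => by
    obtain ⟨c, hc, hmin⟩ := list_exists_min (b :: L) (by simp)
    rcases le_total a c with h | h
    · refine ⟨a, by simp, fun d hd => ?_⟩
      rcases List.mem_cons.1 hd with rfl | hd
      · exact le_refl _
      · exact h.trans (hmin d hd)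
    · refine ⟨c, List.mem_cons_of_mem _ hc, fun d hd => ?_⟩
      rcases List.mem_cons.1 hd with rfl | hd
      · exact h
      · exact hmin d hd

theorem le_prod_of_mem {M : Type*} [Monoid M] [Preorder M]
    [MulLeftMono M] [MulRightMono M] :
    ∀ {L : List M}, (∀ g ∈ L, (1 : M) ≤ g) → ∀ {e : M}, e ∈ L → e ≤ L.prod
  | [], _, _, he => absurd he List.not_mem_nil
  | a :: L, h1, e, he => by
    rw [List.prod_cons]
    rcases List.mem_cons.1 he with rfl | he
    · exact le_mul_of_one_le_right'
        (List.one_le_prod_of_one_le fun g hg => h1 g (List.mem_cons_of_mem _ hg))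
    · exact (le_prod_of_mem (fun g hg => h1 g (List.mem_cons_of_mem _ hg)) he).trans
        (le_mul_of_one_le_left' (h1 a List.mem_cons_self))

/-- The key order-theoretic fact: in a bi-ordered group, generators `t` and a family
`Z i = tⁱ x t⁻ⁱ` of elements `> 1` cannot satisfy the relation
`Z s · (W(Z) Z_{s+1}) · Z s⁻¹ = (W(Z) Z_{s+1})^m` for `m ≥ 2` and `W` a nonempty
positive word in `Z 0, …, Z (s-1)`. -/
theorem key {G : Type*} [Group G] [LinearOrder G]
    [MulLeftStrictMono G] [MulRightStrictMono G]
    (s m : ℕ) (hm : 2 ≤ m) (w : List (Fin s)) (hw : w ≠ [])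
    (t : G) (Z : ℕ → G)
    (hZ1 : ∀ i, 1 < Z i) (hZsucc : ∀ i, Z (i + 1) = t * Z i * t⁻¹)
    (hrel : Z s * ((w.map fun j : Fin s => Z j.val).prod * Z (s + 1)) * (Z s)⁻¹
      = ((w.map fun j : Fin s => Z j.val).prod * Z (s + 1)) ^ m) : False := by
  haveI : MulLeftMono G := covariantClass_le_of_lt G G _
  haveI : MulRightMono G := covariantClass_le_of_lt G G _
  -- monotonicity transfer: the comparison of consecutive `Z i` is independent of `i`
  have hstep : Z 0 ≤ Z 1 → ∀ i, Z i ≤ Z (i + 1) := by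
    intro h01 i
    induction i with
    | zero => exact h01
    | succ n ih =>
      rw [hZsucc n, hZsucc (n + 1)]
      exact mul_le_mul_left (mul_le_mul_right ih t) t⁻¹
  have hstep' : Z 1 ≤ Z 0 → ∀ i, Z (i + 1) ≤ Z i := by
    intro h01 i
    induction i with
    | zero => exact h01
    | succ n ih =>
      rw [hZsucc n, hZsucc (n + 1)]
      exact mul_le_mul_left (mul_le_mul_right ih t) t⁻¹
  have hmono : Z 0 ≤ Z 1 → ∀ i j, i ≤ j → Z i ≤ Z j := by
    intro h01 i j hij
    induction j, hij using Nat.le_induction with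
    | base => exact le_refl _
    | succ n hn ih => exact ih.trans (hstep h01 n)
  have hanti : Z 1 ≤ Z 0 → ∀ i j, i ≤ j → Z j ≤ Z i := by
    intro h01 i j hij
    induction j, hij using Nat.le_induction with
    | base => exact le_refl _
    | succ n hn ih => exact (hstep' h01 n).trans ih
  -- the letters of `U`
  have hUL : (w.map fun j : Fin s => Z j.val).prod * Z (s + 1)
      = ((w.map fun j : Fin s => Z j.val) ++ [Z (s + 1)]).prod := by
    rw [List.prod_append, List.prod_singleton]
  set L : List G := (w.map fun j : Fin s => Z j.val) ++ [Z (s + 1)] with hLdef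
  set U : G := L.prod with hUdef
  rw [hUL] at hrel
  have hLpos : ∀ g ∈ L, (1 : G) ≤ g := by
    intro g hg
    rcases List.mem_append.1 hg with hg | hg
    · obtain ⟨j, _, rfl⟩ := List.mem_map.1 hg
      exact (hZ1 _).le
    · rcases List.mem_singleton.1 hg with rfl
      exact (hZ1 _).le
  -- a dominating letter `c`
  obtain ⟨c, hc_mem, hc_letters, hc_s⟩ :
      ∃ c : G, c ∈ L ∧ (∀ g ∈ L, g ≤ c) ∧ Z s ≤ c := by
    rcases le_total (Z 0) (Z 1) with h01 | h01
    · -- the `Z i` are nondecreasing: take `c = Z (s+1)`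
      refine ⟨Z (s + 1), List.mem_append_right _ (List.mem_singleton_self _), ?_, ?_⟩
      · intro g hg
        rcases List.mem_append.1 hg with hg | hg
        · obtain ⟨j, _, rfl⟩ := List.mem_map.1 hg
          exact hmono h01 _ _ (Nat.le_of_lt (j.isLt.trans_le (by omega)))
        · rcases List.mem_singleton.1 hg with rfl
          exact le_refl _
      · exact hmono h01 _ _ (by omega)
    · -- the `Z i` are nonincreasing: take `c = Z i₀`, `i₀` the least index occurring in `w`
      obtain ⟨i0, hi0mem, hi0min⟩ :=
        list_exists_min (w.map fun j : Fin s => (j : ℕ)) (by simpa using hw)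
      obtain ⟨j0, hj0w, hj0⟩ := List.mem_map.1 hi0mem
      have hi0lt : i0 < s := hj0 ▸ j0.isLt
      refine ⟨Z i0, List.mem_append_left _ (List.mem_map.2 ⟨j0, hj0w, by rw [hj0]⟩), ?_, ?_⟩
      · intro g hg
        rcases List.mem_append.1 hg with hg | hg
        · obtain ⟨j, hjw, rfl⟩ := List.mem_map.1 hg
          exact hanti h01 _ _ (hi0min _ (List.mem_map.2 ⟨j, hjw, rfl⟩))
        · rcases List.mem_singleton.1 hg with rfl
          exact hanti h01 _ _ (by omega)
      · exact hanti h01 _ _ (by omega)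
  have hc1 : 1 < c :=
    lt_of_lt_of_le (hZ1 (s + 1))
      (hc_letters _ (List.mem_append_right _ (List.mem_singleton_self _)))
  have hcU : c ≤ U := le_prod_of_mem hLpos hc_mem
  have hUc : U ≤ c ^ L.length := List.prod_le_pow_card L c hc_letters
  -- iterated conjugation: `(Z s)ⁿ U (Z s)⁻ⁿ = U^(mⁿ)`
  have hiter : ∀ n : ℕ, (Z s) ^ n * U * ((Z s) ^ n)⁻¹ = U ^ m ^ n := by
    intro n
    induction n with
    | zero => simp
    | succ n ih =>
      have h1 : (Z s) ^ (n + 1) * U * ((Z s) ^ (n + 1))⁻¹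
          = Z s * ((Z s) ^ n * U * ((Z s) ^ n)⁻¹) * (Z s)⁻¹ := by group
      rw [h1, ih, ← conj_pow, hrel, ← pow_mul, ← pow_succ']
  -- the contradiction: `c^(mⁿ) ≤ U^(mⁿ) ≤ c^(n+ℓ)` while `mⁿ > n+ℓ`
  set ℓ : ℕ := L.length with hlen
  set n : ℕ := ℓ + 1 with hn
  have harith : n + ℓ < m ^ n := by
    have h1 : ℓ < 2 ^ ℓ := Nat.lt_two_pow_self
    have h2 : 2 ^ n ≤ m ^ n := Nat.pow_le_pow_left hm n
    have h3 : (2 : ℕ) ^ n = 2 * 2 ^ ℓ := by rw [hn, pow_succ]; ring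
    omega
  have hup : U ^ m ^ n ≤ c ^ (n + ℓ) := by
    rw [← hiter n]
    calc (Z s) ^ n * U * ((Z s) ^ n)⁻¹
        ≤ c ^ n * c ^ ℓ * 1 := by
          refine mul_le_mul' (mul_le_mul' (pow_le_pow_left' hc_s n) hUc) ?_
          exact inv_le_one'.mpr (one_le_pow_of_one_le' (hZ1 s).le n)
      _ = c ^ (n + ℓ) := by rw [mul_one, ← pow_add]
  have hlow : c ^ m ^ n ≤ U ^ m ^ n := pow_le_pow_left' hcU _
  exact absurd (hlow.trans hup) (not_le.mpr (pow_lt_pow_right' hc1 harith))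

theorem Wz_eq {s : ℕ} (w : List (Fin s)) :
    Wz w = (w.map fun j : Fin s => zgen j.val).prod := by
  rw [Wz]
  congr 1
  induction w with
  | nil => rfl
  | cons a l ih =>
    simp only [List.map_cons]
    rw [← ih]
    rfl

/-- The image of the generator `x` is nontrivial in `Γ_W` (it has nontrivial image in the
abelianization `ℤ × ℤ/((|w|+1)(m-1))`). -/
theorem X_ne_one (s m : ℕ) (hm : 2 ≤ m) (w : List (Fin s)) (hw : w ≠ []) :
    (PresentedGroup.of (rels := ({relatorW s m w} : Set (FreeGroup Bool))) false) ≠ 1 := by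
  obtain ⟨m', rfl⟩ : ∃ m', m = m' + 2 := ⟨m - 2, by omega⟩
  set N : ℕ := (w.length + 1) * (m' + 1) with hN
  haveI : Fact (1 < N) := ⟨by
    have : 1 ≤ w.length := by
      cases w with
      | nil => exact absurd rfl hw
      | cons a l => simp
    calc 1 < 2 * 1 := by norm_num
    _ ≤ (w.length + 1) * (m' + 1) := Nat.mul_le_mul (by omega) (by omega)⟩
  set a : Multiplicative (ZMod N) := Multiplicative.ofAdd 1 with ha
  have haN : a ^ N = 1 := by
    rw [ha, ← ofAdd_nsmul, nsmul_eq_mul, mul_one, ZMod.natCast_self]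
    rfl
  set f : Bool → Multiplicative (ZMod N) := fun b => cond b 1 a with hf
  have hlift : ∀ r ∈ ({relatorW s (m' + 2) w} : Set (FreeGroup Bool)),
      FreeGroup.lift f r = 1 := by
    intro r hr
    rcases Set.mem_singleton_iff.1 hr with rfl
    have hz : ∀ i, FreeGroup.lift f (zgen i) = a := by
      intro i
      simp [zgen, hf]
    have hW : FreeGroup.lift f (Wz w) = a ^ w.length := by
      rw [Wz_eq, map_list_prod, List.map_map]
      have h : (⇑(FreeGroup.lift f)) ∘ (fun j : Fin s => zgen j.val) = fun _ => a := by
        funext j; exact hz _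
      rw [h, List.map_const', List.prod_replicate]
    have hfree : ∀ (b : Multiplicative (ZMod N)) (k M : ℕ),
        b * (b ^ k * b) * b⁻¹ * ((b ^ k * b) ^ M)⁻¹ = b ^ (k + 1) * (b ^ ((k + 1) * M))⁻¹ := by
      intro b k M
      have hs : b ^ k * b = b ^ (k + 1) := (pow_succ b k).symm
      rw [hs, ← pow_mul]
      group
    rw [relatorW]
    simp only [map_mul, map_inv, map_pow, hz, hW]
    rw [hfree, mul_inv_eq_one]
    have h2 : (w.length + 1) * (m' + 2) = (w.length + 1) + N := by rw [hN]; ring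
    rw [h2]
    conv_rhs => rw [pow_add, haN, mul_one]
  intro hX
  have h := congrArg (PresentedGroup.toGroup hlift) hX
  rw [PresentedGroup.toGroup.of, map_one] at h
  have h1 : (1 : ZMod N) = 0 := by simpa [hf, ha] using h
  exact one_ne_zero h1

/-- The hard case of the main theorem: no bi-invariant strict total order on `Γ_W`
can make the generator `x` positive. -/
theorem aux (s m : ℕ) (hm : 2 ≤ m) (w : List (Fin s)) (hw : w ≠ [])
    (lt : ΓW s m w → ΓW s m w → Prop) (hSTO : IsStrictTotalOrder (ΓW s m w) lt)
    (hL : ∀ f g h : ΓW s m w, lt g h → lt (f * g) (f * h))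
    (hR : ∀ f g h : ΓW s m w, lt g h → lt (g * f) (h * f))
    (hx : lt 1 (PresentedGroup.of (rels := ({relatorW s m w} : Set (FreeGroup Bool))) false)) :
    False := by
  haveI := hSTO
  haveI : DecidableRel lt := Classical.decRel _
  letI : LinearOrder (ΓW s m w) := linearOrderOfSTO lt
  haveI : MulLeftStrictMono (ΓW s m w) := ⟨fun a b c h => hL a b c h⟩
  haveI : MulRightStrictMono (ΓW s m w) := ⟨fun a b c h => hR a b c h⟩
  set mk' := PresentedGroup.mk ({relatorW s m w} : Set (FreeGroup Bool)) with hmk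
  set T : ΓW s m w := PresentedGroup.of true with hT
  set X : ΓW s m w := PresentedGroup.of false with hX
  set Z : ℕ → ΓW s m w := fun i => T ^ i * X * (T ^ i)⁻¹ with hZ
  have hZsucc : ∀ i, Z (i + 1) = T * Z i * T⁻¹ := by
    intro i
    show T ^ (i + 1) * X * (T ^ (i + 1))⁻¹ = T * (T ^ i * X * (T ^ i)⁻¹) * T⁻¹
    group
  have hX1 : (1 : ΓW s m w) < X := hx
  have hZ1 : ∀ i, 1 < Z i := by
    intro i
    have h := mul_lt_mul_left (mul_lt_mul_right hX1 (T ^ i)) (T ^ i)⁻¹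
    show (1 : ΓW s m w) < T ^ i * X * (T ^ i)⁻¹
    simpa using h
  have hmkz : ∀ i, mk' (zgen i) = Z i := by
    intro i
    show mk' (zgen i) = T ^ i * X * (T ^ i)⁻¹
    rw [zgen, map_mul, map_mul, map_inv, map_pow]
    rfl
  have hmkW : mk' (Wz w) = (w.map fun j : Fin s => Z j.val).prod := by
    rw [Wz_eq, map_list_prod, List.map_map]
    congr 1
  have h0 : mk' (zgen s * (Wz w * zgen (s + 1)) * (zgen s)⁻¹ * ((Wz w * zgen (s + 1)) ^ m)⁻¹)
      = 1 :=
    (QuotientGroup.eq_one_iff (relatorW s m w)).mpr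
      (Subgroup.subset_normalClosure (Set.mem_singleton _))
  simp only [map_mul, map_inv, map_pow, hmkz, hmkW] at h0
  rw [mul_inv_eq_one] at h0
  exact key s m hm w hw T Z hZ1 hZsucc h0

end GammaWProof

/-- For `s ≥ 1`, `m ≥ 2` and every nontrivial positive word `W` (encoded by the nonempty
list `w` of its letters), the one-relator group `Γ_W` is not bi-orderable. -/
theorem gammaW_not_biorderable (s m : ℕ) (hs : 1 ≤ s) (hm : 2 ≤ m)
    (w : List (Fin s)) (hw : w ≠ []) :
    ¬ IsBiOrderable (GammaW.ΓW s m w) := by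
  rintro ⟨lt, hSTO, hL, hR⟩
  haveI := hSTO
  rcases trichotomous_of lt 1
      (PresentedGroup.of (rels := ({GammaW.relatorW s m w} : Set (FreeGroup Bool))) false)
    with h | h | h
  · exact GammaWProof.aux s m hm w hw lt hSTO hL hR h
  · exact GammaWProof.X_ne_one s m hm w hw h.symm
  · -- flip the order
    set lt' : GammaW.ΓW s m w → GammaW.ΓW s m w → Prop := fun a b => lt b a with hlt'
    haveI hTri : IsTrichotomous (GammaW.ΓW s m w) lt' :=
      ⟨fun a b h1 h2 => (trichotomous_of lt a b).elim (fun h' => absurd h' h2)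
        (fun h' => h'.elim id (fun h'' => absurd h'' h1))⟩
    haveI hTr : IsTrans (GammaW.ΓW s m w) lt' := ⟨fun a b c h1 h2 => trans_of lt h2 h1⟩
    haveI hIr : IsIrrefl (GammaW.ΓW s m w) lt' := ⟨fun a h' => irrefl_of lt a h'⟩
    haveI hSTO' : IsStrictTotalOrder (GammaW.ΓW s m w) lt' := { }
    exact GammaWProof.aux s m hm w hw lt' hSTO'
      (fun f g h' hh => hL f h' g hh) (fun f g h' hh => hR f h' g hh) h
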